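/- Define α₀ = 0 and α_q = (∑_{i=1}^q (1-λ₁η)^{i-1})/(1-λ₁η)^q for q ≥ 1, where 0 < λ₁η < 1. Suppose |z| < λ₂ and u₀ > 0, and define the sequence u_{m+1} = S((1-λ₁η)u_m - ηz) where S is soft-thresholding at level λ₂η (S(d) = d - λ₂η if d ≥ λ₂η, 0 if |d| < λ₂η, d + λ₂η if d ≤ -λ₂η). Let q₀ satisfy α_{q₀}η(z+λ₂) ≤ u₀ < α_{q₀+1}η(z+λ₂). Then for 0 ≤ m ≤ q₀, u_m = (1-λ₁η)^m [u₀ - α_m η(z+λ₂)], and for all m > q₀, u_m = 0. -/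

import Mathlib

/-- pSCOPE recovery rule, case 1(a): skipped-coordinate recursion under
soft-thresholding with `|z| < λ₂` and `u₀ > 0`. -/
theorem recovery_rule_case_1a
    (lam1 lam2 η z : ℝ)
    (hlam1 : 0 < lam1) (hlam2 : 0 < lam2) (hη : 0 < η)
    (hle1 : lam1 * η < 1) (hz : |z| < lam2)
    (S : ℝ → ℝ)
    (hS : ∀ x, S x = if lam2 * η ≤ x then x - lam2 * η
                     else if x ≤ -(lam2 * η) then x + lam2 * η else 0)
    (α : ℕ → ℝ) (hα0 : α 0 = 0)
    (hα : ∀ q : ℕ, 1 ≤ q →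
      α q = (∑ i ∈ Finset.range q, (1 - lam1 * η) ^ i) / (1 - lam1 * η) ^ q)
    (u : ℕ → ℝ) (hu0 : 0 < u 0)
    (hrec : ∀ m : ℕ, u (m + 1) = S ((1 - lam1 * η) * u m - η * z))
    (q0 : ℕ)
    (hq0l : α q0 * (η * (z + lam2)) ≤ u 0)
    (hq0r : u 0 < α (q0 + 1) * (η * (z + lam2))) :
    (∀ m ≤ q0, u m = (1 - lam1 * η) ^ m * (u 0 - α m * (η * (z + lam2)))) ∧
    (∀ m, q0 < m → u m = 0) := by
  obtain ⟨hz1, hz2⟩ := abs_lt.mp hz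
  set β := 1 - lam1 * η with hβdef
  have hβ0 : 0 < β := by simp only [hβdef]; linarith
  have hβ1 : β < 1 := by
    have := mul_pos hlam1 hη
    simp only [hβdef]; linarith
  have hc0 : 0 < η * (z + lam2) := mul_pos hη (by linarith)
  -- key recurrence for α
  have hstep : ∀ q : ℕ, α (q + 1) * β = α q + 1 := by
    intro q
    match q with
    | 0 =>
      have h1 := hα 1 le_rfl
      rw [h1, hα0, Finset.sum_range_one]
      field_simp
      norm_num
    | Nat.succ n =>
      have h1 := hα (n + 1) (by omega)
      have h2 := hα (n + 2) (by omega)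
      rw [h1, h2, Finset.sum_range_succ]
      have hne : β ^ (n + 1) ≠ 0 := pow_ne_zero _ (ne_of_gt hβ0)
      field_simp
      ring
  have hαnonneg : ∀ q : ℕ, 0 ≤ α q := by
    intro q
    induction q with
    | zero => simp [hα0]
    | succ n ih =>
      have h := hstep n
      nlinarith
  have hαmono : Monotone α := by
    apply monotone_nat_of_le_succ
    intro n
    have h := hstep n
    have h2 : α n * β ≤ α n := by nlinarith [hαnonneg n]
    nlinarith [hαnonneg n]
  -- geometric-sum identity
  have hid : ∀ m : ℕ, α m * β ^ m * (1 - β) = 1 - β ^ m := by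
    intro m
    induction m with
    | zero => simp [hα0]
    | succ n ih =>
      have h := hstep n
      calc α (n + 1) * β ^ (n + 1) * (1 - β)
          = (α (n + 1) * β) * β ^ n * (1 - β) := by ring
        _ = (α n + 1) * β ^ n * (1 - β) := by rw [h]
        _ = α n * β ^ n * (1 - β) + β ^ n * (1 - β) := by ring
        _ = (1 - β ^ n) + β ^ n * (1 - β) := by rw [ih]
        _ = 1 - β ^ (n + 1) := by ring
  -- one-step algebraic identity
  have hkey : ∀ m : ℕ,
      β * (β ^ m * (u 0 - α m * (η * (z + lam2)))) - η * z - lam2 * η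
        = β ^ (m + 1) * (u 0 - α (m + 1) * (η * (z + lam2))) := by
    intro m
    have h1 : α (m + 1) * β = α m + 1 := hstep m
    have h2 := hid m
    linear_combination (β ^ m * (η * (z + lam2))) * h1 + (η * (z + lam2)) * h2
  -- main formula on [0, q0]
  have hmain : ∀ m, m ≤ q0 → u m = β ^ m * (u 0 - α m * (η * (z + lam2))) := by
    intro m
    induction m with
    | zero => intro _; simp [hα0]
    | succ n ih =>
      intro hle
      have hm := ih (le_of_lt (Nat.lt_of_succ_le hle))
      have hpos : 0 ≤ u 0 - α (n + 1) * (η * (z + lam2)) := by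
        have hmo : α (n + 1) ≤ α q0 := hαmono hle
        nlinarith
      have hkn := hkey n
      have hnn : 0 ≤ β ^ (n + 1) * (u 0 - α (n + 1) * (η * (z + lam2))) :=
        mul_nonneg (le_of_lt (pow_pos hβ0 _)) hpos
      have hge : lam2 * η ≤ β * u n - η * z := by
        rw [hm]; linarith
      rw [hrec n, hS, if_pos hge, hm]
      linarith
  refine ⟨hmain, ?_⟩
  -- vanishing after q0
  have hbase : u (q0 + 1) = 0 := by
    have hq := hmain q0 le_rfl
    have hunn : 0 ≤ u q0 := by
      rw [hq]
      exact mul_nonneg (le_of_lt (pow_pos hβ0 _)) (by linarith)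
    have hkn := hkey q0
    have hneg : β ^ (q0 + 1) * (u 0 - α (q0 + 1) * (η * (z + lam2))) < 0 := by
      have : u 0 - α (q0 + 1) * (η * (z + lam2)) < 0 := by linarith
      exact mul_neg_of_pos_of_neg (pow_pos hβ0 _) this
    have h1 : ¬ (lam2 * η ≤ β * u q0 - η * z) := by
      rw [hq]; intro h; linarith
    have h2 : ¬ (β * u q0 - η * z ≤ -(lam2 * η)) := by
      intro h
      have : 0 ≤ β * u q0 := mul_nonneg (le_of_lt hβ0) hunn
      nlinarith
    rw [hrec q0, hS, if_neg h1, if_neg h2]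
  intro m hm
  induction m with
  | zero => omega
  | succ n ih =>
    rcases Nat.lt_or_ge q0 n with h | h
    · have hn0 : u n = 0 := ih h
      rw [hrec n, hn0, hS]
      have h1 : ¬ (lam2 * η ≤ β * 0 - η * z) := by
        intro hh; nlinarith
      have h2 : ¬ (β * 0 - η * z ≤ -(lam2 * η)) := by
        intro hh; nlinarith
      rw [if_neg h1, if_neg h2]
    · have : n = q0 := by omega
      rw [this]; exact hbase
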